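/- Let ℑ(x) = ∫₀ˣ √(2/π)·exp(u²/2) du. For every real x, limsup_{c→∞} (1 + ℑ(c·x)²) / exp(c²x²) < ∞. -/

import Mathlib

open Filter

noncomputable section

/-- ℑ(x) = ∫₀ˣ √(2/π)·exp(u²/2) du. -/
def ImInt (x : ℝ) : ℝ := ∫ u in (0:ℝ)..x, Real.sqrt (2 / Real.pi) * Real.exp (u ^ 2 / 2)

lemma contI : Continuous (fun u : ℝ => Real.exp (u ^ 2 / 2)) := by continuity

lemma I_le (t : ℝ) (ht : 0 ≤ t) :
    (∫ u in (0:ℝ)..t, Real.exp (u ^ 2 / 2)) ≤ Real.sqrt 2 * Real.exp (t ^ 2 / 2) := by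
  rcases le_or_gt t (Real.sqrt 2) with h | h
  · calc (∫ u in (0:ℝ)..t, Real.exp (u ^ 2 / 2))
        ≤ ∫ _u in (0:ℝ)..t, Real.exp (t ^ 2 / 2) := by
          apply intervalIntegral.integral_mono_on ht
            (contI.intervalIntegrable _ _) (intervalIntegrable_const)
          intro u hu
          exact Real.exp_le_exp.2 (by nlinarith [hu.1, hu.2])
      _ = t * Real.exp (t ^ 2 / 2) := by simp
      _ ≤ Real.sqrt 2 * Real.exp (t ^ 2 / 2) :=
          mul_le_mul_of_nonneg_right h (Real.exp_pos _).le
  · have ht0 : 0 < t := lt_of_le_of_lt (Real.sqrt_nonneg 2) h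
    have h2 : (0:ℝ) < Real.sqrt 2 := Real.sqrt_pos.2 (by norm_num)
    calc (∫ u in (0:ℝ)..t, Real.exp (u ^ 2 / 2))
        ≤ ∫ u in (0:ℝ)..t, Real.exp (t / 2 * u) := by
          apply intervalIntegral.integral_mono_on ht
            (contI.intervalIntegrable _ _)
            ((Real.continuous_exp.comp (continuous_const.mul continuous_id)).intervalIntegrable _ _)
          intro u hu
          refine Real.exp_le_exp.2 ?_
          have := mul_le_mul_of_nonneg_right hu.2 hu.1
          simp only [Pi.mul_apply, id]
          nlinarith
      _ = (t / 2)⁻¹ * (Real.exp (t ^ 2 / 2) - 1) := by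
          rw [intervalIntegral.integral_comp_mul_left Real.exp (by positivity : t / 2 ≠ 0)]
          rw [integral_exp, smul_eq_mul, mul_zero, Real.exp_zero,
            show t / 2 * t = t ^ 2 / 2 by ring]
      _ ≤ Real.sqrt 2 * Real.exp (t ^ 2 / 2) := by
          have h1 : (t / 2)⁻¹ ≤ Real.sqrt 2 := by
            rw [inv_div, div_le_iff₀ ht0]
            nlinarith [Real.sq_sqrt (show (0:ℝ) ≤ 2 by norm_num)]
          have h3 : Real.exp (t ^ 2 / 2) - 1 ≤ Real.exp (t ^ 2 / 2) := by linarith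
          have h4 : (0:ℝ) ≤ Real.exp (t ^ 2 / 2) - 1 := by
            have := Real.one_le_exp (by positivity : (0:ℝ) ≤ t ^ 2 / 2); linarith
          calc (t / 2)⁻¹ * (Real.exp (t ^ 2 / 2) - 1)
              ≤ Real.sqrt 2 * (Real.exp (t ^ 2 / 2) - 1) := mul_le_mul_of_nonneg_right h1 h4
            _ ≤ Real.sqrt 2 * Real.exp (t ^ 2 / 2) := mul_le_mul_of_nonneg_left h3 h2.le

lemma I_neg (t : ℝ) :
    (∫ u in (0:ℝ)..(-t), Real.exp (u ^ 2 / 2)) = -(∫ u in (0:ℝ)..t, Real.exp (u ^ 2 / 2)) := by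
  have : (∫ u in (0:ℝ)..t, Real.exp (u ^ 2 / 2))
      = ∫ u in (0:ℝ)..t, Real.exp ((-u) ^ 2 / 2) := by
    congr 1; funext u; rw [neg_sq]
  rw [this, intervalIntegral.integral_comp_neg (fun u => Real.exp (u ^ 2 / 2)), neg_zero,
    intervalIntegral.integral_symm]

lemma imInt_sq_le (y : ℝ) : ImInt y ^ 2 ≤ 2 * Real.exp (y ^ 2) := by
  have hpi : (0:ℝ) < Real.pi := Real.pi_pos
  have hIy : ImInt y = Real.sqrt (2 / Real.pi) * ∫ u in (0:ℝ)..y, Real.exp (u ^ 2 / 2) := by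
    rw [ImInt, intervalIntegral.integral_const_mul]
  set I : ℝ → ℝ := fun t => ∫ u in (0:ℝ)..t, Real.exp (u ^ 2 / 2) with hI
  have hsq : I y ^ 2 = I |y| ^ 2 := by
    rcases abs_cases y with ⟨h1, _⟩ | ⟨h1, _⟩
    · rw [h1]
    · rw [h1, hI]; simp only [I_neg]; ring
  have hIabs : I |y| ≤ Real.sqrt 2 * Real.exp (|y| ^ 2 / 2) := I_le _ (abs_nonneg y)
  have hInn : 0 ≤ I |y| := intervalIntegral.integral_nonneg (abs_nonneg y)
    (fun u _ => (Real.exp_pos _).le)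
  have habs2 : |y| ^ 2 = y ^ 2 := sq_abs y
  have hIsq : I y ^ 2 ≤ 2 * Real.exp (y ^ 2) := by
    rw [hsq]
    calc I |y| ^ 2 ≤ (Real.sqrt 2 * Real.exp (|y| ^ 2 / 2)) ^ 2 := by
          apply pow_le_pow_left₀ hInn hIabs
      _ = 2 * Real.exp (y ^ 2) := by
          have harg : |y| ^ 2 / 2 + |y| ^ 2 / 2 = y ^ 2 := by rw [habs2]; ring
          rw [mul_pow, Real.sq_sqrt (by norm_num : (0:ℝ) ≤ 2), pow_two, ← Real.exp_add, harg]
  have hc : Real.sqrt (2 / Real.pi) ^ 2 = 2 / Real.pi :=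
    Real.sq_sqrt (by positivity)
  have hle1 : (2 : ℝ) / Real.pi ≤ 1 := by
    rw [div_le_one hpi]; linarith [Real.pi_gt_three]
  calc ImInt y ^ 2 = (2 / Real.pi) * I y ^ 2 := by rw [hIy, mul_pow, hc]
    _ ≤ 1 * (2 * Real.exp (y ^ 2)) := by
        apply mul_le_mul hle1 hIsq (sq_nonneg _) (by norm_num)
    _ = 2 * Real.exp (y ^ 2) := one_mul _

theorem stmt18 (x : ℝ) :
    Filter.limsup
      (fun c : ℝ => (((1 + ImInt (c * x) ^ 2) / Real.exp (c ^ 2 * x ^ 2) : ℝ) : EReal))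
      atTop < ⊤ := by
  have hle : Filter.limsup
      (fun c : ℝ => (((1 + ImInt (c * x) ^ 2) / Real.exp (c ^ 2 * x ^ 2) : ℝ) : EReal))
      atTop ≤ ((3 : ℝ) : EReal) := by
    apply Filter.limsup_le_of_le (by isBoundedDefault)
    filter_upwards with c
    rw [EReal.coe_le_coe_iff]
    have hy : c ^ 2 * x ^ 2 = (c * x) ^ 2 := by ring
    rw [hy, div_le_iff₀ (Real.exp_pos _)]
    have h1 : (1:ℝ) ≤ Real.exp ((c * x) ^ 2) := Real.one_le_exp (sq_nonneg _)
    have h2 := imInt_sq_le (c * x)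
    linarith
  exact lt_of_le_of_lt hle (EReal.coe_lt_top 3)
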